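/- For r ∈ F = F_{2^f} and c ∈ Fⁿ, Φ(rc) = φ(∑ᵢ rcᵢ) + 2τ(r² ∑_{i<j} cᵢcⱼ), where Φ(c) = ∑ᵢ φ(cᵢ), φ is the mod-4 weight with respect to a self-complementary basis, and τ is the trace to F₂ lifted to {0,1} ⊂ ℤ/4ℤ (note subtraction equals addition in ℤ/4ℤ for 2-torsion elements). -/

import Mathlib

open Finset

-- 2·val as an additive hom ZMod 2 →+ ZMod 4
def gg : ZMod 2 →+ ZMod 4 :=
  ⟨⟨fun t => 2 * (t.val : ZMod 4), by decide⟩, by decide⟩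

lemma gg_apply (t : ZMod 2) : gg t = 2 * (t.val : ZMod 4) := rfl

lemma gg_add_self (t : ZMod 2) : gg t + gg t = 0 := by revert t; decide

lemma pair_succ {F : Type*} [Field F] (n : ℕ) (a : Fin (n+1) → F) :
    ∑ p ∈ univ.filter (fun p : Fin (n+1) × Fin (n+1) => p.1 < p.2), a p.1 * a p.2
    = a 0 * ∑ i : Fin n, a i.succ +
      ∑ p ∈ univ.filter (fun p : Fin n × Fin n => p.1 < p.2), a p.1.succ * a p.2.succ := by
  rw [Finset.sum_filter, Finset.sum_filter, Fintype.sum_prod_type, Fintype.sum_prod_type,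
    Fin.sum_univ_succ]
  simp [Fin.sum_univ_succ, Fin.succ_pos, Fin.succ_lt_succ_iff, Finset.mul_sum]

lemma trace_mul_eq {F : Type*} [Field F] [Fintype F] [Algebra (ZMod 2) F] {f : ℕ}
    (b : Module.Basis (Fin f) (ZMod 2) F)
    (hb : ∀ i j, Algebra.trace (ZMod 2) F (b i * b j) = if i = j then 1 else 0)
    (x y : F) :
    Algebra.trace (ZMod 2) F (x * y) = ∑ i, b.repr x i * b.repr y i := by
  have hxy : x * y = ∑ i, ∑ j, (b.repr x i * b.repr y j) • (b i * b j) := by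
    conv_lhs => rw [← b.sum_repr x, ← b.sum_repr y]
    rw [Finset.sum_mul_sum]
    refine Finset.sum_congr rfl fun i _ => Finset.sum_congr rfl fun j _ => ?_
    rw [smul_mul_smul_comm, mul_smul]
  rw [hxy, map_sum]
  simp only [map_sum, map_smul, hb, smul_eq_mul]
  refine Finset.sum_congr rfl fun i _ => ?_
  simp [Finset.sum_ite_eq]

lemma phi_add {F : Type*} [Field F] [Fintype F] [Algebra (ZMod 2) F] {f : ℕ}
    (b : Module.Basis (Fin f) (ZMod 2) F)
    (hb : ∀ i j, Algebra.trace (ZMod 2) F (b i * b j) = if i = j then 1 else 0)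
    (φ : F → ZMod 4)
    (hφ : ∀ a, φ a = ∑ i, ((b.repr a i).val : ZMod 4))
    (x y : F) :
    φ (x + y) = φ x + φ y + 2 * ((Algebra.trace (ZMod 2) F (x * y)).val : ZMod 4) := by
  rw [hφ, hφ, hφ, ← gg_apply, trace_mul_eq b hb, map_sum, ← Finset.sum_add_distrib,
    ← Finset.sum_add_distrib]
  refine Finset.sum_congr rfl fun i _ => ?_
  simp only [map_add, Finsupp.add_apply, gg_apply]
  generalize b.repr x i = s
  generalize b.repr y i = t
  revert s t; decide

lemma phi_sum {F : Type*} [Field F] [Fintype F] [Algebra (ZMod 2) F] {f : ℕ}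
    (b : Module.Basis (Fin f) (ZMod 2) F)
    (hb : ∀ i j, Algebra.trace (ZMod 2) F (b i * b j) = if i = j then 1 else 0)
    (φ : F → ZMod 4)
    (hφ : ∀ a, φ a = ∑ i, ((b.repr a i).val : ZMod 4)) :
    ∀ (n : ℕ) (a : Fin n → F),
      ∑ i, φ (a i) = φ (∑ i, a i) +
        2 * ((Algebra.trace (ZMod 2) F
          (∑ p ∈ univ.filter (fun p : Fin n × Fin n => p.1 < p.2), a p.1 * a p.2)).val : ZMod 4) := by
  intro n
  induction n with
  | zero =>
      intro a
      simp [hφ]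
  | succ n ih =>
      intro a
      rw [Fin.sum_univ_succ, Fin.sum_univ_succ, ih, pair_succ,
        phi_add b hb φ hφ (a 0) (∑ i : Fin n, a i.succ), ← gg_apply, ← gg_apply, ← gg_apply,
        map_add (Algebra.trace (ZMod 2) F), map_add gg]
      have h := gg_add_self ((Algebra.trace (ZMod 2) F) (a 0 * ∑ i : Fin n, a i.succ))
      linear_combination -h


theorem stmt_11 {F : Type*} [Field F] [Fintype F] [Algebra (ZMod 2) F] {f : ℕ}
    (hcard : Fintype.card F = 2 ^ f)
    (b : Module.Basis (Fin f) (ZMod 2) F)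
    (hb : ∀ i j, Algebra.trace (ZMod 2) F (b i * b j) = if i = j then 1 else 0)
    (φ : F → ZMod 4)
    (hφ : ∀ a, φ a = ∑ i, ((b.repr a i).val : ZMod 4)) :
    ∀ (n : ℕ) (r : F) (c : Fin n → F),
      ∑ i, φ (r * c i) = φ (∑ i, r * c i) +
        2 * ((Algebra.trace (ZMod 2) F
          (r ^ 2 * ∑ p ∈ univ.filter (fun p : Fin n × Fin n => p.1 < p.2),
            c p.1 * c p.2)).val : ZMod 4) := by
  intro n r c
  have key := phi_sum b hb φ hφ n (fun i => r * c i)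
  have harg : ∑ p ∈ univ.filter (fun p : Fin n × Fin n => p.1 < p.2),
      (r * c p.1) * (r * c p.2)
      = r ^ 2 * ∑ p ∈ univ.filter (fun p : Fin n × Fin n => p.1 < p.2), c p.1 * c p.2 := by
    rw [Finset.mul_sum]
    exact Finset.sum_congr rfl fun p _ => by ring
  rw [key, harg]
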